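/- Let p ≥ 2, e ≥ 1, and 2 ≤ l ≤ p^e with p-adic expansion l - 1 = l_0 + l_1 p + ⋯ + l_{e-1} p^{e-1} (0 ≤ l_k ≤ p-1). Define v_i(l) = l·w_i(p^e) − p^e·w_i(l) where w_i(m) = ⌊(m-1)/p^{i-1}⌋ − ⌊(m-1)/p^i⌋. Then for every 1 ≤ j ≤ e, the partial sum ∑_{i=1}^{j} v_i(l) equals p^e − p^{e-j}(1 + ∑_{k=0}^{j-1} l_k p^k); in particular this sum is nonnegative. -/
import Mathlib


/-- `w p i m = ⌊(m-1)/p^(i-1)⌋ - ⌊(m-1)/p^i⌋` (natural floor division). -/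
def w (p i m : ℕ) : ℕ := (m - 1) / p ^ (i - 1) - (m - 1) / p ^ i

/-- `v p e i l = l·w_i(p^e) − p^e·w_i(l)` as an integer. -/
def v (p e i l : ℕ) : ℤ := (l : ℤ) * (w p i (p ^ e) : ℤ) - (p : ℤ) ^ e * (w p i l : ℤ)

lemma sumw (p m : ℕ) (hp : 2 ≤ p) (j : ℕ) :
    (∑ i ∈ Finset.Icc 1 j, (w p i m : ℤ)) =
      ((m - 1 : ℕ) : ℤ) - (((m - 1) / p ^ j : ℕ) : ℤ) := by
  induction j with
  | zero => simp
  | succ n ih =>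
    rw [Finset.sum_Icc_succ_top (by omega : 1 ≤ n + 1), ih]
    have hle : (m - 1) / p ^ (n + 1) ≤ (m - 1) / p ^ n :=
      Nat.div_le_div_left (pow_le_pow_right₀ (by omega) (by omega)) (pow_pos (by omega) n)
    have : (w p (n + 1) m : ℤ) =
        (((m - 1) / p ^ n : ℕ) : ℤ) - (((m - 1) / p ^ (n + 1) : ℕ) : ℤ) := by
      simp only [w, Nat.add_sub_cancel]
      push_cast [Nat.cast_sub hle]
      ring
    rw [this]; ring

lemma digits_sum (p m : ℕ) (j : ℕ) :
    ∑ k ∈ Finset.range j, (m / p ^ k % p) * p ^ k = m % p ^ j := by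
  induction j with
  | zero => simp [Nat.mod_one]
  | succ n ih =>
    rw [Finset.sum_range_succ, ih, pow_succ, Nat.mod_mul]
    ring

lemma pow_div_sub_one (p j e : ℕ) (hp : 2 ≤ p) (hje : j ≤ e) :
    (p ^ e - 1) / p ^ j = p ^ (e - j) - 1 := by
  have h1 : 1 ≤ p ^ j := Nat.one_le_pow _ _ (by omega)
  have h2 : p ^ j ≤ p ^ e := pow_le_pow_right₀ (by omega) hje
  have key : p ^ e - 1 = p ^ j * (p ^ (e - j) - 1) + (p ^ j - 1) := by
    rw [Nat.mul_sub, mul_one, ← pow_add, Nat.add_sub_cancel' hje]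
    omega
  rw [key, Nat.mul_add_div (by omega), Nat.div_eq_of_lt (by omega)]
  omega

theorem stmt2 (p e l j : ℕ) (hp : 2 ≤ p) (he : 1 ≤ e) (hl2 : 2 ≤ l) (hl : l ≤ p ^ e)
    (hj1 : 1 ≤ j) (hje : j ≤ e) :
    (∑ i ∈ Finset.Icc 1 j, v p e i l) =
      (p : ℤ) ^ e - (p : ℤ) ^ (e - j) *
        (1 + ∑ k ∈ Finset.range j, (((l - 1) / p ^ k % p : ℕ) : ℤ) * (p : ℤ) ^ k) ∧
    0 ≤ ∑ i ∈ Finset.Icc 1 j, v p e i l := by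
  set m := l - 1 with hm
  have hsum : (∑ i ∈ Finset.Icc 1 j, v p e i l) =
      (l : ℤ) * (∑ i ∈ Finset.Icc 1 j, (w p i (p ^ e) : ℤ)) -
      (p : ℤ) ^ e * (∑ i ∈ Finset.Icc 1 j, (w p i l : ℤ)) := by
    simp only [v, Finset.sum_sub_distrib, Finset.mul_sum]
  rw [hsum, sumw p (p ^ e) hp j, sumw p l hp j, pow_div_sub_one p j e hp hje]
  have hdig : (∑ k ∈ Finset.range j, (((l - 1) / p ^ k % p : ℕ) : ℤ) * (p : ℤ) ^ k) =
      ((m % p ^ j : ℕ) : ℤ) := by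
    rw [← digits_sum p m j]
    push_cast
    rfl
  rw [hdig]
  have hdm : p ^ j * (m / p ^ j) + m % p ^ j = m := Nat.div_add_mod m (p ^ j)
  have hmod : m % p ^ j < p ^ j := Nat.mod_lt _ (pow_pos (by omega) j)
  have hl' : (l : ℤ) = (m : ℤ) + 1 := by push_cast [hm]; omega
  have hp1 : 0 < p := by omega
  have hpe : ((p ^ e - 1 : ℕ) : ℤ) = (p : ℤ) ^ e - 1 := by
    rw [Nat.cast_sub (Nat.one_le_pow e p hp1)]; push_cast; ring
  have hpej : ((p ^ (e - j) - 1 : ℕ) : ℤ) = (p : ℤ) ^ (e - j) - 1 := by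
    rw [Nat.cast_sub (Nat.one_le_pow (e - j) p hp1)]; push_cast; ring
  have hpow : (p : ℤ) ^ e = (p : ℤ) ^ (e - j) * (p : ℤ) ^ j := by
    rw [← pow_add]; congr 1; omega
  have hdm' : (p : ℤ) ^ j * ((m / p ^ j : ℕ) : ℤ) + ((m % p ^ j : ℕ) : ℤ) = (m : ℤ) := by
    exact_mod_cast congrArg (Nat.cast : ℕ → ℤ) hdm
  constructor
  · rw [hpe, hpej, hl', hpow]
    nlinarith [hdm']
  · rw [hpe, hpej, hl', hpow]
    have hmod' : ((m % p ^ j : ℕ) : ℤ) + 1 ≤ (p : ℤ) ^ j := by exact_mod_cast hmod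
    have hpej' : (0 : ℤ) ≤ (p : ℤ) ^ (e - j) := by positivity
    nlinarith [hdm', mul_le_mul_of_nonneg_left hmod' hpej']
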